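/- Let a, b, c, d ∈ ℂ with ad − bc ≠ 0 and let φ(z) = (az+b)/(cz+d) be a selfmap of 𝔻. Suppose φ has a fixed point w ∈ 𝔻 (φ(w) = w, |w| < 1) and also fixes a point ζ with |ζ| = 1 (cζ + d ≠ 0 and φ(ζ) = ζ). Then the linear-fractional map φ∘σ⁻¹, given explicitly by Θ(z) = ((a·conj(d) + b·conj(b))·z + (a·conj(c) + b·conj(a))) / ((c·conj(d) + d·conj(b))·z + (c·conj(c) + d·conj(a))), maps 𝔻 into 𝔻: for every z ∈ 𝔻 its denominator is nonzero and |Θ(z)| < 1. -/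

import Mathlib

open ComplexConjugate

/-- If `φ(z) = (az+b)/(cz+d)` is a linear-fractional selfmap of the unit disk with a
fixed point `w ∈ 𝔻` and a fixed point `ζ` on the unit circle, then the
linear-fractional map `φ∘σ⁻¹` (with the displayed coefficients) maps the unit disk
into itself. -/
theorem phi_comp_sigma_inv_selfmap_of_interior_boundary (a b c d w ζ : ℂ)
    (hdet : a * d - b * c ≠ 0)
    (hself : ∀ z : ℂ, ‖z‖ < 1 →
      c * z + d ≠ 0 ∧ ‖(a * z + b) / (c * z + d)‖ < 1)
    (hw : ‖w‖ < 1) (hfixw : (a * w + b) / (c * w + d) = w)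
    (hζ : ‖ζ‖ = 1) (hζden : c * ζ + d ≠ 0)
    (hfixζ : (a * ζ + b) / (c * ζ + d) = ζ) :
    ∀ z : ℂ, ‖z‖ < 1 →
      (c * conj d + d * conj b) * z + (c * conj c + d * conj a) ≠ 0 ∧
      ‖((a * conj d + b * conj b) * z + (a * conj c + b * conj a)) /
        ((c * conj d + d * conj b) * z + (c * conj c + d * conj a))‖ < 1 := by
  -- basic facts about ζ and w
  have hζ0 : ζ ≠ 0 := by
    intro h; rw [h] at hζ; simp at hζ
  have hζζ : ζ * conj ζ = 1 := by
    rw [Complex.mul_conj]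
    rw [← Complex.sq_norm, hζ]
    norm_num
  have hζc : conj ζ = ζ⁻¹ := by
    field_simp
    linear_combination hζζ
  -- fixed point equations
  have hcw : c * w + d ≠ 0 := (hself w hw).1
  have hw1 : a * w + b = w * (c * w + d) := by
    rw [div_eq_iff hcw] at hfixw; exact hfixw
  have hz1 : a * ζ + b = ζ * (c * ζ + d) := by
    rw [div_eq_iff hζden] at hfixζ; exact hfixζ
  have hζw : ζ - w ≠ 0 := by
    intro h
    have : ζ = w := by linear_combination h
    rw [this] at hζ
    rw [hζ] at hw
    exact lt_irrefl 1 hw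
  have ha : a = d + c * (ζ + w) := by
    have h3 : (ζ - w) * (a - d - c * (ζ + w)) = 0 := by linear_combination hz1 - hw1
    rcases mul_eq_zero.mp h3 with h | h
    · exact absurd h hζw
    · linear_combination h
  have hb : b = -(c * w * ζ) := by linear_combination hz1 - ζ * ha
  -- conjugate versions
  have hca : conj a = conj d + conj c * (conj ζ + conj w) := by
    rw [ha]; simp only [map_add, map_mul]
  have hcb : conj b = -(conj c * conj w * conj ζ) := by
    rw [hb]; simp only [map_neg, map_mul]
  -- abbreviations
  set A : ℂ := a * conj d + b * conj b with hA
  set B : ℂ := a * conj c + b * conj a with hB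
  set C : ℂ := c * conj d + d * conj b with hC
  set D : ℂ := c * conj c + d * conj a with hD
  set Δ : ℂ := a * d - b * c with hΔ
  set t : ℝ := Complex.normSq c * (1 - Complex.normSq w) * Complex.normSq (c * ζ + d) with htdef
  have htnn : 0 ≤ t := by
    apply mul_nonneg
    apply mul_nonneg (Complex.normSq_nonneg c)
    · have : Complex.normSq w < 1 := by
        rw [← Complex.sq_norm]; nlinarith [norm_nonneg w]
      linarith
    · exact Complex.normSq_nonneg _
  have htC : ((t : ℝ) : ℂ) = (c * conj c) * (1 - w * conj w) * ((c * ζ + d) * conj (c * ζ + d)) := by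
    rw [htdef]
    push_cast
    rw [Complex.mul_conj c, Complex.mul_conj w, Complex.mul_conj (c * ζ + d)]
  have hnsΔ : 0 < Complex.normSq Δ := Complex.normSq_pos.mpr hdet
  -- key identity 1 : B * conj D - A * conj C = t * ζ
  have hX : B * conj D - A * conj C = ((t : ℝ) : ℂ) * ζ := by
    rw [htC, hB, hA, hD, hC]
    simp only [map_add, map_mul, Complex.conj_conj]
    rw [hca, hcb, ha, hb]
    rw [hζc]
    field_simp
    ring
  -- key identity 2 : D * conj D - C * conj C = normSq Δ + t
  have hr : D * conj D - C * conj C = ((Complex.normSq Δ + t : ℝ) : ℂ) := by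
    push_cast
    rw [← Complex.mul_conj Δ, htC, hD, hC, hΔ]
    simp only [map_add, map_mul, map_sub, Complex.conj_conj]
    rw [hca, hcb, ha, hb]
    rw [hζc]
    field_simp
    ring
  -- determinant identity
  have hΔ' : A * D - B * C = Δ * conj Δ := by
    rw [hA, hB, hC, hD, hΔ]
    simp only [map_sub, map_mul]
    ring
  -- |D|^2 - |C|^2 = normSq Δ + t
  have hDC : Complex.normSq D - Complex.normSq C = Complex.normSq Δ + t := by
    have := hr
    rw [Complex.mul_conj D, Complex.mul_conj C] at this
    exact_mod_cast (by push_cast at this ⊢; linear_combination this :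
      ((Complex.normSq D - Complex.normSq C : ℝ) : ℂ) = ((Complex.normSq Δ + t : ℝ) : ℂ))
  have habsCD : ‖C‖ < ‖D‖ := by
    have h1 : ‖C‖ ^ 2 < ‖D‖ ^ 2 := by
      rw [Complex.sq_norm, Complex.sq_norm]; linarith
    nlinarith [norm_nonneg C, norm_nonneg D]
  -- main pointwise argument
  intro z hz
  have hMpos : ‖C * z + D‖ > 0 := by
    have h1 : ‖C * z‖ ≤ ‖C‖ := by
      rw [norm_mul]
      calc ‖C‖ * ‖z‖ ≤ ‖C‖ * 1 := by
            exact mul_le_mul_of_nonneg_left hz.le (norm_nonneg C)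
        _ = ‖C‖ := mul_one _
    have h2 : ‖D‖ ≤ ‖C * z + D‖ + ‖C * z‖ := by
      have h4 := norm_add_le (C * z + D) (-(C * z))
      have h5 : C * z + D + -(C * z) = D := by ring
      rw [h5, norm_neg] at h4
      exact h4
    linarith
  have hM : C * z + D ≠ 0 := by
    intro h; rw [h] at hMpos; simp at hMpos
  refine ⟨hM, ?_⟩
  -- |conj D * z + conj C| < |C * z + D|
  have hlt : ‖conj D * z + conj C‖ < ‖C * z + D‖ := by
    have hid : Complex.normSq (C * z + D) - Complex.normSq (conj D * z + conj C)
        = (Complex.normSq D - Complex.normSq C) * (1 - Complex.normSq z) := by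
      simp only [Complex.normSq_apply, Complex.add_re, Complex.add_im, Complex.mul_re,
        Complex.mul_im, Complex.conj_re, Complex.conj_im]
      ring
    have hz2 : Complex.normSq z < 1 := by
      rw [← Complex.sq_norm]; nlinarith [norm_nonneg z]
    have hpos : 0 < Complex.normSq (C * z + D) - Complex.normSq (conj D * z + conj C) := by
      rw [hid]; have : 0 < Complex.normSq Δ + t := by linarith
      nlinarith
    have := hpos
    rw [← Complex.sq_norm, ← Complex.sq_norm] at this
    nlinarith [norm_nonneg (conj D * z + conj C), norm_nonneg (C * z + D)]
  -- the key linear combination identity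
  have hkey : ((Complex.normSq Δ + t : ℝ) : ℂ) * (A * z + B)
      = ((t : ℝ) : ℂ) * ζ * (C * z + D) + (Δ * conj Δ) * (conj D * z + conj C) := by
    rw [← hr, ← hX, ← hΔ']
    ring
  -- take absolute values
  have habs : (Complex.normSq Δ + t) * ‖A * z + B‖
      < (Complex.normSq Δ + t) * ‖C * z + D‖ := by
    have h1 : ‖((Complex.normSq Δ + t : ℝ) : ℂ) * (A * z + B)‖
        = (Complex.normSq Δ + t) * ‖A * z + B‖ := by
      rw [norm_mul, Complex.norm_real, Real.norm_eq_abs, abs_of_nonneg (by linarith)]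
    have h2 : ‖((t : ℝ) : ℂ) * ζ * (C * z + D)‖
        = t * ‖C * z + D‖ := by
      rw [norm_mul, norm_mul, Complex.norm_real, Real.norm_eq_abs, abs_of_nonneg htnn, hζ, mul_one]
    have h3 : ‖(Δ * conj Δ) * (conj D * z + conj C)‖
        = Complex.normSq Δ * ‖conj D * z + conj C‖ := by
      rw [norm_mul, Complex.mul_conj, Complex.norm_real, Real.norm_eq_abs,
        abs_of_nonneg (Complex.normSq_nonneg Δ)]
    calc (Complex.normSq Δ + t) * ‖A * z + B‖
        = ‖((Complex.normSq Δ + t : ℝ) : ℂ) * (A * z + B)‖ := h1.symm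
      _ = ‖((t : ℝ) : ℂ) * ζ * (C * z + D) + (Δ * conj Δ) * (conj D * z + conj C)‖ := by
            rw [hkey]
      _ ≤ ‖((t : ℝ) : ℂ) * ζ * (C * z + D)‖
            + ‖(Δ * conj Δ) * (conj D * z + conj C)‖ := norm_add_le _ _
      _ = t * ‖C * z + D‖ + Complex.normSq Δ * ‖conj D * z + conj C‖ := by
            rw [h2, h3]
      _ < t * ‖C * z + D‖ + Complex.normSq Δ * ‖C * z + D‖ := by
            have := mul_lt_mul_of_pos_left hlt hnsΔ
            linarith
      _ = (Complex.normSq Δ + t) * ‖C * z + D‖ := by ring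
  have hfin : ‖A * z + B‖ < ‖C * z + D‖ := by
    have hpos : 0 < Complex.normSq Δ + t := by linarith
    exact lt_of_mul_lt_mul_left habs hpos.le
  rw [norm_div]
  rw [div_lt_one hMpos]
  exact hfin
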